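/- Let A, B ⊆ [0,1]^d be nonempty sets and ε ∈ [0,1]. If A ⊆ B^{+ε}, then max(HV(A) − HV(B), 0) ≤ d · ε · (R + ε)^{d−1}. -/

import Mathlib

open MeasureTheory ENNReal Pointwise

/-- The dominated region of `S` with respect to the reference point `z`. -/
def dominatedRegion {d : ℕ} (z : Fin d → ℝ) (S : Set (Fin d → ℝ)) : Set (Fin d → ℝ) :=
  {y | ∃ u ∈ S, z ≤ y ∧ y ≤ u}

/-- The dominated hypervolume: Lebesgue measure of the dominated region. -/
noncomputable def HV {d : ℕ} (z : Fin d → ℝ) (S : Set (Fin d → ℝ)) : ℝ :=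
  (volume (dominatedRegion z S)).toReal

/-- The ℓ∞-expansion `S^{+ε}` (the norm on `Fin d → ℝ` is the sup norm). -/
def expandLinf {d : ℕ} (S : Set (Fin d → ℝ)) (ε : ℝ) : Set (Fin d → ℝ) :=
  {x | ∃ s ∈ S, ‖x - s‖ ≤ ε}

/-- One-sided HV comparison: if `A ⊆ B^{+ε}`, then the positive part of the
hypervolume deficit is at most `d·ε·(R+ε)^(d-1)` with `R = max_j (1 - z_j)`. -/
theorem hv_one_sided_stability {d : ℕ} (hd : 1 ≤ d) (z : Fin d → ℝ) (hz : ∀ j, z j < 0)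
    (A B : Set (Fin d → ℝ)) (hA : A.Nonempty) (hB : B.Nonempty)
    (hAsub : A ⊆ Set.Icc 0 1) (hBsub : B ⊆ Set.Icc 0 1)
    (ε : ℝ) (hε0 : 0 ≤ ε) (hε1 : ε ≤ 1)
    (hAB : A ⊆ expandLinf B ε) :
    max (HV z A - HV z B) 0 ≤ (d : ℝ) * ε * ((⨆ j, (1 - z j)) + ε) ^ (d - 1) := by
  set R : ℝ := ⨆ j, (1 - z j) with hRdef
  have hj0 : (0 : ℕ) < d := hd
  have hRge : ∀ j : Fin d, 1 - z j ≤ R := by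
    intro j
    rw [hRdef]
    exact le_ciSup (Finite.bddAbove_range fun j => 1 - z j) j
  have hR1 : (1 : ℝ) ≤ R := by
    have := hRge ⟨0, hj0⟩
    have := hz ⟨0, hj0⟩
    linarith
  have hRε : (0 : ℝ) ≤ R + ε := by linarith
  have hc0 : (0 : ℝ) ≤ ε * (R + ε) ^ (d - 1) :=
    mul_nonneg hε0 (pow_nonneg hRε _)
  set S : ℝ≥0∞ := ENNReal.ofReal (ε * (R + ε) ^ (d - 1)) with hSdef
  -- the intermediate regions
  set E : ℕ → Set (Fin d → ℝ) := fun k =>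
    {y | z ≤ y ∧ ∃ b ∈ B, ∀ j : Fin d, if (j : ℕ) < k then y j ≤ b j + ε else y j ≤ b j}
    with hEdef
  have hE0 : E 0 = dominatedRegion z B := by
    ext y
    simp only [hEdef, dominatedRegion, Set.mem_setOf_eq, Nat.not_lt_zero, if_false]
    constructor
    · rintro ⟨hzy, b, hbB, hle⟩
      exact ⟨b, hbB, hzy, fun j => hle j⟩
    · rintro ⟨b, hbB, hzy, hle⟩
      exact ⟨hzy, b, hbB, fun j => hle j⟩
  have hDA : dominatedRegion z A ⊆ E d := by
    rintro y ⟨u, huA, hzy, hyu⟩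
    obtain ⟨b, hbB, hub⟩ := hAB huA
    refine ⟨hzy, b, hbB, fun j => ?_⟩
    simp only [j.isLt, if_true]
    have h1 : |u j - b j| ≤ ε := by
      have := norm_le_pi_norm (u - b) j
      simp only [Pi.sub_apply, Real.norm_eq_abs] at this
      exact this.trans hub
    have h2 := (abs_le.mp h1).2
    have := hyu j
    linarith
  -- one expansion step
  have hstep : ∀ k, k < d → volume (E (k + 1)) ≤ volume (E k) + S := by
    intro k hk
    set K : Fin d := ⟨k, hk⟩ with hKdef
    set v : Fin d → ℝ := fun j => if j = K then ε else 0 with hvdef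
    set w : Fin d → ℝ := fun j => if j = K then z K + ε else 1 + ε with hwdef
    have hsub : E (k + 1) ⊆ (v +ᵥ E k) ∪ Set.Icc z w := by
      rintro y ⟨hzy, b, hbB, hder⟩
      by_cases hyk : z K + ε ≤ y K
      · left
        refine Set.mem_vadd_set.2 ⟨y - v, ⟨?_, b, hbB, ?_⟩, ?_⟩
        · intro j
          simp only [Pi.sub_apply, hvdef]
          by_cases hjK : j = K
          · subst hjK; simp only [if_true]; linarith
          · simp only [hjK, if_false, sub_zero]; exact hzy j
        · intro j
          by_cases hjlt : (j : ℕ) < k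
          · have hjK : j ≠ K := by
              intro h
              rw [h] at hjlt
              have hKval : (K : ℕ) = k := rfl
              omega
            have := hder j
            simp only [Nat.lt_succ_of_lt hjlt, if_true] at this
            simp only [hjlt, if_true, Pi.sub_apply, hvdef, hjK, if_false, sub_zero]
            exact this
          · simp only [hjlt, if_false, Pi.sub_apply, hvdef]
            by_cases hjK : j = K
            · subst hjK
              have := hder K
              have hKval : (K : ℕ) = k := rfl
              simp only [hKval, Nat.lt_succ_self, if_true] at this
              simp only [if_true]
              linarith
            · have hjgt : ¬ (j : ℕ) < k + 1 := by
                have : (j : ℕ) ≠ k := fun h => hjK (Fin.ext h)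
                omega
              have := hder j
              simp only [hjgt, if_false] at this
              simp only [hjK, if_false, sub_zero]
              exact this
        · show v + (y - v) = y
          abel
      · right
        refine ⟨hzy, fun j => ?_⟩
        simp only [hwdef]
        by_cases hjK : j = K
        · subst hjK; simp only [if_true]; linarith
        · simp only [hjK, if_false]
          have hb1 : b j ≤ 1 := (hBsub hbB).2 j
          have := hder j
          by_cases hjlt : (j : ℕ) < k + 1
          · simp only [hjlt, if_true] at this; linarith
          · simp only [hjlt, if_false] at this; linarith
    have hslab : volume (Set.Icc z w) ≤ S := by
      rw [← Set.pi_univ_Icc, volume_pi_pi]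
      have hprod : ∀ j : Fin d, volume (Set.Icc (z j) (w j)) = ENNReal.ofReal (w j - z j) :=
        fun j => Real.volume_Icc
      simp only [hprod]
      rw [← Finset.mul_prod_erase Finset.univ _ (Finset.mem_univ K)]
      have hK : ENNReal.ofReal (w K - z K) = ENNReal.ofReal ε := by
        simp [hwdef]
      have hrest : (∏ j ∈ Finset.univ.erase K, ENNReal.ofReal (w j - z j)) ≤
          ENNReal.ofReal (R + ε) ^ (d - 1) := by
        calc (∏ j ∈ Finset.univ.erase K, ENNReal.ofReal (w j - z j))
            ≤ ∏ _j ∈ Finset.univ.erase K, ENNReal.ofReal (R + ε) := by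
              refine Finset.prod_le_prod' fun j hj => ?_
              have hjK : j ≠ K := (Finset.mem_erase.mp hj).1
              have : w j - z j ≤ R + ε := by
                simp only [hwdef, hjK, if_false]
                have := hRge j
                linarith
              exact ENNReal.ofReal_le_ofReal this
          _ = ENNReal.ofReal (R + ε) ^ (d - 1) := by
              rw [Finset.prod_const, Finset.card_erase_of_mem (Finset.mem_univ K),
                Finset.card_univ, Fintype.card_fin]
      calc ENNReal.ofReal (w K - z K) * ∏ j ∈ Finset.univ.erase K, ENNReal.ofReal (w j - z j)
          ≤ ENNReal.ofReal ε * ENNReal.ofReal (R + ε) ^ (d - 1) := by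
            rw [hK]; exact mul_le_mul_right hrest _
        _ = S := by
            rw [hSdef, ← ENNReal.ofReal_pow hRε, ← ENNReal.ofReal_mul hε0]
    calc volume (E (k + 1)) ≤ volume ((v +ᵥ E k) ∪ Set.Icc z w) := measure_mono hsub
      _ ≤ volume (v +ᵥ E k) + volume (Set.Icc z w) := measure_union_le _ _
      _ ≤ volume (E k) + S := by
          rw [measure_vadd]
          exact add_le_add_right hslab _
  -- iterate
  have hiter : ∀ k, k ≤ d → volume (E k) ≤ volume (E 0) + k * S := by
    intro k
    induction k with
    | zero => intro _; simp
    | succ n ih =>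
        intro hn
        have hnd : n < d := hn
        calc volume (E (n + 1)) ≤ volume (E n) + S := hstep n hnd
          _ ≤ volume (E 0) + n * S + S := add_le_add_left (ih hnd.le) _
          _ = volume (E 0) + ((n + 1 : ℕ) : ℝ≥0∞) * S := by
              push_cast
              ring
  have hmain : volume (dominatedRegion z A) ≤ volume (dominatedRegion z B) + d * S := by
    calc volume (dominatedRegion z A) ≤ volume (E d) := measure_mono hDA
      _ ≤ volume (E 0) + d * S := hiter d le_rfl
      _ = volume (dominatedRegion z B) + d * S := by rw [hE0]
  -- finiteness of the B-volume
  have hBfin : volume (dominatedRegion z B) ≠ ⊤ := by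
    have hsub1 : dominatedRegion z B ⊆ Set.Icc z 1 := by
      rintro y ⟨u, huB, hzy, hyu⟩
      exact ⟨hzy, hyu.trans (hBsub huB).2⟩
    exact ((measure_mono hsub1).trans_lt (isCompact_Icc.measure_lt_top)).ne
  have hdS : ((d : ℝ≥0∞) * S) = ENNReal.ofReal ((d : ℝ) * (ε * (R + ε) ^ (d - 1))) := by
    rw [hSdef, ← ENNReal.ofReal_natCast d, ← ENNReal.ofReal_mul (Nat.cast_nonneg d)]
  have hfin2 : volume (dominatedRegion z B) + (d : ℝ≥0∞) * S ≠ ⊤ := by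
    rw [hdS]
    exact ENNReal.add_ne_top.2 ⟨hBfin, ENNReal.ofReal_ne_top⟩
  have hreal : HV z A - HV z B ≤ (d : ℝ) * ε * (R + ε) ^ (d - 1) := by
    have h1 : HV z A ≤ (volume (dominatedRegion z B) + (d : ℝ≥0∞) * S).toReal :=
      ENNReal.toReal_mono hfin2 hmain
    rw [hdS, ENNReal.toReal_add hBfin ENNReal.ofReal_ne_top,
      ENNReal.toReal_ofReal (by positivity)] at h1
    have : HV z B = (volume (dominatedRegion z B)).toReal := rfl
    rw [HV] at h1 ⊢
    nlinarith [h1]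
  refine max_le hreal ?_
  have : (0:ℝ) ≤ (d : ℝ) * ε := mul_nonneg (Nat.cast_nonneg _) hε0
  exact mul_nonneg this (pow_nonneg hRε _)
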